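/- Let p be a prime and r >= 1, and let Upsilon(p^r) be the tridiagonal (r+1) x (r+1) matrix with Upsilon_{i,j} = p if i = j = 0 or i = j = r, Upsilon_{i,j} = p^{min(j,r-j)-1}(p^2+1) if 1 <= i = j <= r-1, Upsilon_{i,j} = -p^{min(j,r-j)} if |i-j| = 1, and 0 otherwise. Then for each column index f: the weighted sum over i of Upsilon_{i,f} * p^i equals p^{r-1}(p^2 - 1) if f = r and equals 0 if f < r; and the weighted sum over i of Upsilon_{i,f} * p^{r-i} equals p^{r-1}(p^2 - 1) if f = 0 and equals 0 if f > 0. -/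
import Mathlib


/-- The tridiagonal matrix `Υ(p^r)`, indexed by `0, 1, …, r`. -/
def Upsilon (p r : ℕ) : Matrix (Fin (r + 1)) (Fin (r + 1)) ℤ := fun i j =>
  if (i : ℕ) = (j : ℕ) then
    (if (j : ℕ) = 0 ∨ (j : ℕ) = r then (p : ℤ)
     else (p : ℤ) ^ (min (j : ℕ) (r - (j : ℕ)) - 1) * ((p : ℤ) ^ 2 + 1))
  else if (i : ℕ) = (j : ℕ) + 1 ∨ (j : ℕ) = (i : ℕ) + 1 then
    -(p : ℤ) ^ (min (j : ℕ) (r - (j : ℕ)))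
  else 0

/-- Natural-number indexed version of `Upsilon`. -/
def UN (p r i j : ℕ) : ℤ :=
  if i = j then
    (if j = 0 ∨ j = r then (p : ℤ)
     else (p : ℤ) ^ (min j (r - j) - 1) * ((p : ℤ) ^ 2 + 1))
  else if i = j + 1 ∨ j = i + 1 then -(p : ℤ) ^ (min j (r - j))
  else 0

lemma UN_zero {p r i j : ℕ} (h1 : i ≠ j) (h2 : i ≠ j + 1) (h3 : j ≠ i + 1) :
    UN p r i j = 0 := by
  simp [UN, h1, h2, h3]

lemma sum_col0 (p r : ℕ) (hr : 1 ≤ r) (w : ℕ → ℤ) :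
    ∑ i ∈ Finset.range (r + 1), UN p r i 0 * w i = (p : ℤ) * w 0 - w 1 := by
  rw [← Finset.sum_subset (s₁ := ({0, 1} : Finset ℕ))
      (by intro x hx; simp at hx ⊢; omega)
      (by
        intro x _ hx
        simp only [Finset.mem_insert, Finset.mem_singleton, not_or] at hx
        rw [UN_zero (by omega) (by omega) (by omega), zero_mul])]
  rw [Finset.sum_pair (by norm_num)]
  simp [UN]
  ring

lemma sum_colr (p s : ℕ) (w : ℕ → ℤ) :
    ∑ i ∈ Finset.range (s + 2), UN p (s + 1) i (s + 1) * w i =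
      (p : ℤ) * w (s + 1) - w s := by
  rw [← Finset.sum_subset (s₁ := ({s, s + 1} : Finset ℕ))
      (by intro x hx; simp at hx ⊢; omega)
      (by
        intro x hxr hx
        simp only [Finset.mem_range] at hxr
        simp only [Finset.mem_insert, Finset.mem_singleton, not_or] at hx
        rw [UN_zero (by omega) (by omega) (by omega), zero_mul])]
  rw [Finset.sum_pair (by omega)]
  simp [UN]
  ring

lemma sum_colmid (p r k : ℕ) (hk : k + 2 ≤ r) (w : ℕ → ℤ) :
    ∑ i ∈ Finset.range (r + 1), UN p r i (k + 1) * w i =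
      -(p : ℤ) ^ (min (k + 1) (r - (k + 1))) * w k
      + (p : ℤ) ^ (min (k + 1) (r - (k + 1)) - 1) * ((p : ℤ) ^ 2 + 1) * w (k + 1)
      - (p : ℤ) ^ (min (k + 1) (r - (k + 1))) * w (k + 2) := by
  rw [← Finset.sum_subset (s₁ := ({k, k + 1, k + 2} : Finset ℕ))
      (by intro x hx; simp at hx ⊢; omega)
      (by
        intro x _ hx
        simp only [Finset.mem_insert, Finset.mem_singleton, not_or] at hx
        rw [UN_zero (by omega) (by omega) (by omega), zero_mul])]
  rw [Finset.sum_insert (by simp), Finset.sum_insert (by simp), Finset.sum_singleton]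
  have h1 : k + 1 ≠ 0 := by omega
  have h2 : k + 1 ≠ r := by omega
  simp [UN, h1, h2]
  ring

theorem upsilon_weighted_col_sums (p r : ℕ) (hp : p.Prime) (hr : 1 ≤ r)
    (f : Fin (r + 1)) :
    (∑ i : Fin (r + 1), Upsilon p r i f * (p : ℤ) ^ (i : ℕ) =
      if (f : ℕ) = r then (p : ℤ) ^ (r - 1) * ((p : ℤ) ^ 2 - 1) else 0) ∧
    (∑ i : Fin (r + 1), Upsilon p r i f * (p : ℤ) ^ (r - (i : ℕ)) =
      if (f : ℕ) = 0 then (p : ℤ) ^ (r - 1) * ((p : ℤ) ^ 2 - 1) else 0) := by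
  obtain ⟨s, rfl⟩ : ∃ s, r = s + 1 := ⟨r - 1, by omega⟩
  obtain ⟨fv, hfv⟩ := f
  have hcoe : ((⟨fv, hfv⟩ : Fin (s + 1 + 1)) : ℕ) = fv := rfl
  have hconv : ∀ w : ℕ → ℤ,
      ∑ i : Fin (s + 1 + 1), Upsilon p (s + 1) i ⟨fv, hfv⟩ * w i =
        ∑ i ∈ Finset.range (s + 1 + 1), UN p (s + 1) i fv * w i := by
    intro w
    exact Fin.sum_univ_eq_sum_range (fun i => UN p (s + 1) i fv * w i) (s + 1 + 1)
  simp only [hcoe]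
  rcases eq_or_ne fv 0 with rfl | hf0
  · rw [hconv (fun n => (p : ℤ) ^ n), hconv (fun n => (p : ℤ) ^ (s + 1 - n)),
      sum_col0 p (s + 1) (by omega), sum_col0 p (s + 1) (by omega)]
    constructor
    · simp
    · simp [pow_succ]
      ring
  rcases eq_or_ne fv (s + 1) with rfl | hfr
  · rw [hconv (fun n => (p : ℤ) ^ n), hconv (fun n => (p : ℤ) ^ (s + 1 - n)),
      sum_colr p s, sum_colr p s]
    constructor
    · simp [pow_succ]
      ring
    · simp
  · obtain ⟨k, rfl⟩ : ∃ k, fv = k + 1 := ⟨fv - 1, by omega⟩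
    have hk : k + 2 ≤ s + 1 := by omega
    rw [hconv (fun n => (p : ℤ) ^ n), hconv (fun n => (p : ℤ) ^ (s + 1 - n)),
      sum_colmid p (s + 1) k hk, sum_colmid p (s + 1) k hk]
    rw [if_neg hfr, if_neg hf0]
    have hm : 1 ≤ min (k + 1) (s + 1 - (k + 1)) := by omega
    obtain ⟨m, hmm⟩ : ∃ m, min (k + 1) (s + 1 - (k + 1)) = m + 1 :=
      ⟨min (k + 1) (s + 1 - (k + 1)) - 1, by omega⟩
    have hg : 1 ≤ s + 1 - (k + 1) := by omega
    obtain ⟨g, hgg⟩ : ∃ g, s + 1 - (k + 1) = g + 1 := ⟨s + 1 - (k + 1) - 1, by omega⟩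
    have e1 : s + 1 - k = g + 2 := by omega
    have e2 : s + 1 - (k + 1) = g + 1 := hgg
    have e3 : s + 1 - (k + 2) = g := by omega
    simp only [hmm, Nat.add_sub_cancel]
    constructor
    · simp only [pow_succ]
      ring
    · simp only [e1, e2, e3, pow_succ]
      ring
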